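/- Let X, Y be real symmetric n×n matrices with X positive definite, let G be the 2n×2n block matrix G = [[X + Y X⁻¹ Y, Y X⁻¹],[X⁻¹ Y, X⁻¹]], and let S be the block matrix S = [[X^{1/2}, 0],[X^{−1/2} Y, X^{−1/2}]], where X^{1/2} is the positive square root of X. Then S is symplectic, G = Sᵀ S, and consequently G is a symmetric positive definite symplectic matrix with det G = 1. -/

import Mathlib

open Matrix

/-- The standard symplectic matrix `J = [[0, I],[−I, 0]]`. -/
def stdJ (n : ℕ) : Matrix (Fin n ⊕ Fin n) (Fin n ⊕ Fin n) ℝ :=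
  fromBlocks 0 1 (-1) 0

/-- A real `2n×2n` matrix is symplectic if `Sᵀ J S = J`. -/
def IsSymplecticMat {n : ℕ} (S : Matrix (Fin n ⊕ Fin n) (Fin n ⊕ Fin n) ℝ) : Prop :=
  Sᵀ * stdJ n * S = stdJ n

open scoped ComplexOrder in
/-- The positive semidefinite square root of a positive semidefinite matrix, as defined in
Mathlib of December 2024 (`Matrix.PosSemidef.sqrt`, since removed from Mathlib). -/
noncomputable def Matrix.PosSemidef.sqrt {m : Type*} [Fintype m] [DecidableEq m] {𝕜 : Type*}
    [RCLike 𝕜] {A : Matrix m m 𝕜} (hA : A.PosSemidef) : Matrix m m 𝕜 :=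
  hA.1.eigenvectorUnitary.1 * diagonal ((↑) ∘ (√·) ∘ hA.1.eigenvalues) *
    (star hA.1.eigenvectorUnitary : Matrix m m 𝕜)

lemma psd_sqrt_mul_self {n : ℕ} {A : Matrix (Fin n) (Fin n) ℝ} (hA : A.PosSemidef) :
    hA.sqrt * hA.sqrt = A := by
  have hU := Unitary.coe_star_mul_self hA.1.eigenvectorUnitary
  have hD : diagonal ((↑) ∘ (√·) ∘ hA.1.eigenvalues) * diagonal ((↑) ∘ (√·) ∘ hA.1.eigenvalues)
      = diagonal (RCLike.ofReal ∘ hA.1.eigenvalues : Fin n → ℝ) := by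
    rw [diagonal_mul_diagonal]
    congr 1
    funext i
    simp [Real.mul_self_sqrt (hA.eigenvalues_nonneg i)]
  conv_rhs => rw [hA.1.spectral_theorem, Unitary.conjStarAlgAut_apply]
  rw [← hD]
  simp only [Matrix.PosSemidef.sqrt, Matrix.mul_assoc]
  rw [← Matrix.mul_assoc (star _ : Matrix (Fin n) (Fin n) ℝ) _ _, hU, Matrix.one_mul]
  rfl

lemma psd_sqrt_isHermitian {n : ℕ} {A : Matrix (Fin n) (Fin n) ℝ} (hA : A.PosSemidef) :
    hA.sqrt.IsHermitian := by
  unfold Matrix.IsHermitian Matrix.PosSemidef.sqrt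
  rw [conjTranspose_mul, conjTranspose_mul, diagonal_conjTranspose, Matrix.mul_assoc,
    star_eq_conjTranspose, conjTranspose_conjTranspose]
  congr 3

/-- With `G = [[X + Y X⁻¹ Y, Y X⁻¹],[X⁻¹ Y, X⁻¹]]` and
`S = [[X^{1/2}, 0],[X^{−1/2} Y, X^{−1/2}]]`: `S` is symplectic, `G = Sᵀ S`, and `G` is a
symmetric positive definite symplectic matrix with `det G = 1`. -/
theorem wigner_matrix_factorization
    (n : ℕ) (hn : 1 ≤ n) (X Y : Matrix (Fin n) (Fin n) ℝ)
    (hX : X.IsSymm) (hY : Y.IsSymm) (hXpd : X.PosDef) :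
    IsSymplecticMat
        (fromBlocks hXpd.posSemidef.sqrt 0
          (hXpd.posSemidef.sqrt⁻¹ * Y) hXpd.posSemidef.sqrt⁻¹) ∧
      fromBlocks (X + Y * X⁻¹ * Y) (Y * X⁻¹) (X⁻¹ * Y) X⁻¹ =
        (fromBlocks hXpd.posSemidef.sqrt 0
            (hXpd.posSemidef.sqrt⁻¹ * Y) hXpd.posSemidef.sqrt⁻¹)ᵀ *
          (fromBlocks hXpd.posSemidef.sqrt 0
            (hXpd.posSemidef.sqrt⁻¹ * Y) hXpd.posSemidef.sqrt⁻¹) ∧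
      (fromBlocks (X + Y * X⁻¹ * Y) (Y * X⁻¹) (X⁻¹ * Y) X⁻¹).IsSymm ∧
      (fromBlocks (X + Y * X⁻¹ * Y) (Y * X⁻¹) (X⁻¹ * Y) X⁻¹).PosDef ∧
      IsSymplecticMat (fromBlocks (X + Y * X⁻¹ * Y) (Y * X⁻¹) (X⁻¹ * Y) X⁻¹) ∧
      (fromBlocks (X + Y * X⁻¹ * Y) (Y * X⁻¹) (X⁻¹ * Y) X⁻¹).det = 1 := by
  set R := hXpd.posSemidef.sqrt with hR
  have hRR : R * R = X := psd_sqrt_mul_self hXpd.posSemidef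
  have hRsym : Rᵀ = R := by
    have := psd_sqrt_isHermitian hXpd.posSemidef
    simpa [Matrix.IsHermitian, conjTranspose_eq_transpose_of_trivial] using this
  have hRdet : R.det ≠ 0 := by
    intro h
    have : X.det = 0 := by rw [← hRR, det_mul, h, mul_zero]
    exact hXpd.det_pos.ne' this
  have hRinvR : R⁻¹ * R = 1 := nonsing_inv_mul R hRdet.isUnit
  have hRRinv : R * R⁻¹ = 1 := mul_nonsing_inv R hRdet.isUnit
  have hRinvT : R⁻¹ᵀ = R⁻¹ := by rw [Matrix.transpose_nonsing_inv, hRsym]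
  have hXinv : X⁻¹ = R⁻¹ * R⁻¹ := by rw [← hRR, Matrix.mul_inv_rev]
  set S := fromBlocks R 0 (R⁻¹ * Y) R⁻¹ with hS
  have hYsym : Yᵀ = Y := hY
  have hST : Sᵀ = fromBlocks R (Y * R⁻¹) 0 R⁻¹ := by
    rw [hS, fromBlocks_transpose, hRsym, hRinvT, transpose_mul, hRinvT, hYsym, transpose_zero]
  have hSsymp : IsSymplecticMat S := by
    rw [IsSymplecticMat, stdJ, hST, hS, fromBlocks_multiply, fromBlocks_multiply]
    simp [Matrix.mul_assoc, hRinvR, hRRinv]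
    rw [← Matrix.mul_assoc, hRRinv, Matrix.one_mul, neg_add_cancel]
  have hG : fromBlocks (X + Y * X⁻¹ * Y) (Y * X⁻¹) (X⁻¹ * Y) X⁻¹ = Sᵀ * S := by
    rw [hST, hS, fromBlocks_multiply, hXinv]
    congr 1 <;> simp [Matrix.mul_assoc, hRinvR, hRRinv, hRR]
  have hSdet : S.det ≠ 0 := by
    rw [hS, det_fromBlocks_zero₁₂, det_nonsing_inv]
    simp [Ring.inverse_eq_inv']
    exact fun h => hRdet h
  have hGsymm : (fromBlocks (X + Y * X⁻¹ * Y) (Y * X⁻¹) (X⁻¹ * Y) X⁻¹).IsSymm := by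
    rw [hG, Matrix.IsSymm, transpose_mul, transpose_transpose]
  have hGpd : (fromBlocks (X + Y * X⁻¹ * Y) (Y * X⁻¹) (X⁻¹ * Y) X⁻¹).PosDef := by
    rw [hG]
    refine Matrix.PosDef.of_dotProduct_mulVec_pos ?_ (fun x hx => ?_)
    · show (Sᵀ * S)ᴴ = _
      rw [conjTranspose_eq_transpose_of_trivial, transpose_mul, transpose_transpose]
    · have hxS : S *ᵥ x ≠ 0 := by
        intro h
        have : Function.Injective (S.mulVec) :=
          mulVec_injective_iff_isUnit.mpr ((isUnit_iff_isUnit_det S).mpr hSdet.isUnit)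
        exact hx (this (by simpa using h))
      have : star x ⬝ᵥ ((Sᵀ * S) *ᵥ x) = (S *ᵥ x) ⬝ᵥ (S *ᵥ x) := by
        rw [← mulVec_mulVec, dotProduct_mulVec, star_trivial, vecMul_transpose]
      rw [this]
      have := dotProduct_self_star_pos_iff (v := S *ᵥ x)
      simpa [star_trivial] using this.mpr hxS
  have hGsymp : IsSymplecticMat (fromBlocks (X + Y * X⁻¹ * Y) (Y * X⁻¹) (X⁻¹ * Y) X⁻¹) := by
    have hSJST : S * stdJ n * Sᵀ = stdJ n := by
      rw [stdJ, hST, hS, fromBlocks_multiply, fromBlocks_multiply]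
      simp [Matrix.mul_assoc, hRinvR, hRRinv]
    rw [IsSymplecticMat, hG, transpose_mul, transpose_transpose]
    have hassoc : Sᵀ * S * stdJ n * (Sᵀ * S) = Sᵀ * (S * stdJ n * Sᵀ) * S := by
      simp only [Matrix.mul_assoc]
    rw [hassoc, hSJST]
    exact hSsymp
  have hSdet1 : S.det = 1 := by
    rw [hS, det_fromBlocks_zero₁₂, det_nonsing_inv, Ring.inverse_eq_inv', mul_inv_cancel₀ hRdet]
  have hGdet : (fromBlocks (X + Y * X⁻¹ * Y) (Y * X⁻¹) (X⁻¹ * Y) X⁻¹).det = 1 := by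
    rw [hG, det_mul, det_transpose, hSdet1]; norm_num
  exact ⟨hSsymp, hG, hGsymm, hGpd, hGsymp, hGdet⟩
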